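/- Let λ > 0, τ > 0, and α = (λ/2)(1 + 1/τ). Let X : [0,∞) → ℝ be twice continuously differentiable with X(t) ≥ 0 and X'(t) ≥ 0 for all t ≥ 0, and suppose X''(t) ≥ (λ²/τ) e^{-αt} X(t)² for all t ≥ 0. Then for every t ≥ 0, X'(t)² - X'(0)² ≥ (2λ²/(3τ)) ( e^{-αt} X(t)³ - X(0)³ ). -/

import Mathlib

/-- the energy-type integral inequality in the Kaplan moment blowup
argument: if `X` is `C²`, nonnegative and nondecreasing on `[0,∞)` with
`X'' ≥ (λ²/τ) e^{-αt} X²` there, where `α = (λ/2)(1+1/τ)`, then for all `t ≥ 0`,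
`X'(t)² - X'(0)² ≥ (2λ²/(3τ)) (e^{-αt} X(t)³ - X(0)³)`. -/
theorem stmt_19 (lam τ : ℝ) (hlam : 0 < lam) (hτ : 0 < τ) (X : ℝ → ℝ)
    (hX : ContDiff ℝ 2 X)
    (hX0 : ∀ t : ℝ, 0 ≤ t → 0 ≤ X t)
    (hX' : ∀ t : ℝ, 0 ≤ t → 0 ≤ deriv X t)
    (hineq : ∀ t : ℝ, 0 ≤ t →
      lam ^ 2 / τ * Real.exp (-(lam / 2 * (1 + 1 / τ)) * t) * X t ^ 2 ≤
        deriv (deriv X) t) :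
    ∀ t : ℝ, 0 ≤ t →
      2 * lam ^ 2 / (3 * τ) *
          (Real.exp (-(lam / 2 * (1 + 1 / τ)) * t) * X t ^ 3 - X 0 ^ 3) ≤
        (deriv X t) ^ 2 - (deriv X 0) ^ 2 := by
  set α : ℝ := lam / 2 * (1 + 1 / τ) with hα
  have hαpos : 0 < α := by positivity
  set c : ℝ := 2 * lam ^ 2 / (3 * τ) with hc
  have hcpos : 0 < c := by positivity
  have hX2 : ContDiff ℝ ((1 : ℕ∞) + 1) X := by norm_num; exact hX
  have hd : Differentiable ℝ X := (contDiff_succ_iff_deriv.mp hX2).1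
  have hd' : Differentiable ℝ (deriv X) :=
    (contDiff_succ_iff_deriv.mp hX2).2.2.differentiable (by simp)
  have hgd : ∀ t : ℝ, HasDerivAt
      (fun t => (deriv X t) ^ 2 - c * (Real.exp (-α * t) * X t ^ 3))
      (2 * deriv X t * deriv (deriv X) t -
        c * ((Real.exp (-α * t) * (-α)) * X t ^ 3 +
          Real.exp (-α * t) * (3 * X t ^ 2 * deriv X t))) t := by
    intro t
    have h1 : HasDerivAt (fun t => (deriv X t) ^ 2)
        (2 * (deriv X t) ^ 1 * deriv (deriv X) t) t :=
      ((hd' t).hasDerivAt).pow 2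
    have hlin : HasDerivAt (fun t : ℝ => -α * t) (-α) t := by
      simpa using (hasDerivAt_id t).const_mul (-α)
    have he : HasDerivAt (fun t : ℝ => Real.exp (-α * t))
        (Real.exp (-α * t) * (-α)) t := hlin.exp
    have h3 : HasDerivAt (fun t => X t ^ 3) (3 * X t ^ 2 * deriv X t) t := by
      have := ((hd t).hasDerivAt).fun_pow 3
      simpa using this
    have h2 := he.mul h3
    have := h1.fun_sub (h2.const_mul c)
    simpa [pow_one] using this
  have hmono : MonotoneOn
      (fun t => (deriv X t) ^ 2 - c * (Real.exp (-α * t) * X t ^ 3))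
      (Set.Ici (0 : ℝ)) := by
    apply monotoneOn_of_deriv_nonneg (convex_Ici 0)
    · exact Continuous.continuousOn (by fun_prop)
    · intro t ht
      exact (hgd t).differentiableAt.differentiableWithinAt
    · intro t ht
      rw [interior_Ici] at ht
      have ht0 : (0 : ℝ) ≤ t := le_of_lt ht
      rw [(hgd t).deriv]
      have hE : 0 < Real.exp (-α * t) := Real.exp_pos _
      have h1 := hineq t ht0
      have h2 := hX' t ht0
      have h3 := hX0 t ht0
      have key : lam ^ 2 / τ * Real.exp (-α * t) * X t ^ 2 * deriv X t ≤
          deriv (deriv X) t * deriv X t := by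
        apply mul_le_mul_of_nonneg_right _ h2
        simpa [hα] using h1
      have hc3 : c * (Real.exp (-α * t) * (3 * X t ^ 2 * deriv X t)) =
          2 * (lam ^ 2 / τ * Real.exp (-α * t) * X t ^ 2 * deriv X t) := by
        rw [hc]; field_simp
      have hpos : 0 ≤ c * α * (Real.exp (-α * t) * X t ^ 3) :=
        mul_nonneg (mul_nonneg hcpos.le hαpos.le) (mul_nonneg hE.le (pow_nonneg h3 3))
      nlinarith [key, hc3, hpos]
  intro t ht
  have h := hmono (Set.self_mem_Ici) (Set.mem_Ici.mpr ht) ht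
  simp only at h
  rw [neg_mul, mul_zero, neg_zero, Real.exp_zero, one_mul] at h
  nlinarith [h]
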